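/- arXiv:2404.16623 — 2 statements merged into one kernel-verified Lean document; each statement's English description precedes it below -/
import Mathlib

section
/- Let n, L, c_LB be real numbers with n ≥ 2, c_LB > 0, L ≥ 8/c_LB, and L ≤ n, and set c := max(4, 16/c_LB). Let (S_k)_{k≥0} be a sequence of nonnegative real numbers with S_0 = 0 such that for every k, c_LB · (S_{k+1} − 1) · L ≤ 4n + 2·S_k + 2·S_{k+1}. Then S_k ≤ c·n/L for every k. -/
/-- Arithmetic core of the rebuild-length lemma (Lemma 3): every rebuild
involves at most `c * n / L` operations. -/
theorem rebuild_length_bound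
    (n L cLB : ℝ) (hn : 2 ≤ n) (hcLB : 0 < cLB) (hL8 : 8 / cLB ≤ L) (hLn : L ≤ n)
    (c : ℝ) (hc : c = max 4 (16 / cLB))
    (S : ℕ → ℝ) (hS0 : S 0 = 0) (hSnonneg : ∀ k, 0 ≤ S k)
    (hrec : ∀ k, cLB * (S (k + 1) - 1) * L ≤ 4 * n + 2 * S k + 2 * S (k + 1)) :
    ∀ k, S k ≤ c * n / L := by
  have hcL8 : 8 ≤ cLB * L := by
    have := (div_le_iff₀ hcLB).mp hL8
    linarith [mul_comm L cLB]
  have hLpos : 0 < L := by nlinarith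
  have hc4 : 4 ≤ c := hc ▸ le_max_left _ _
  have hcc16 : 16 ≤ cLB * c := by
    have h16 : 16 / cLB ≤ c := hc ▸ le_max_right _ _
    have := (div_le_iff₀ hcLB).mp h16
    linarith [mul_comm c cLB]
  have hnpos : (0:ℝ) < n := by linarith
  intro k
  induction k with
  | zero => rw [hS0]; positivity
  | succ k ih =>
    rw [le_div_iff₀ hLpos]
    have ihL : S k * L ≤ c * n := (le_div_iff₀ hLpos).mp ih
    have hr := hrec k
    have hb := hSnonneg (k + 1)
    have ha := hSnonneg k
    nlinarith [mul_nonneg hb hLpos.le, mul_le_mul_of_nonneg_right hr hLpos.le,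
      mul_le_mul_of_nonneg_left hLn (mul_nonneg hcLB.le hb),
      mul_le_mul_of_nonneg_right hcL8 (mul_nonneg hb hLpos.le),
      mul_le_mul_of_nonneg_right hcc16 (mul_nonneg hnpos.le hLpos.le),
      mul_le_mul_of_nonneg_left hcL8 (mul_nonneg (by linarith : (0:ℝ) ≤ c) hnpos.le),
      mul_le_mul_of_nonneg_left hLn (mul_nonneg (mul_nonneg hcLB.le (by linarith : (0:ℝ) ≤ c)) hnpos.le)]
end

section
/- Let n, L, c_LB be real numbers with n ≥ 2, c_LB > 0, L ≥ 8/c_LB, and L ≤ n, and set c := max(4, 16/c_LB). Suppose S_1 and S_2 are nonnegative real numbers such that S_1 ≤ c·n/L and c_LB · (S_2 − 1) · L ≤ 4n + 2·S_1 + 2·S_2. Then S_2 ≤ c·n/L. -/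
/-- Inductive step of the rebuild-length lemma (Lemma 3): if the previous
rebuild involved at most `c * n / L` operations, then so does the current one. -/
theorem rebuild_length_inductive_step
    (n L cLB : ℝ) (hn : 2 ≤ n) (hcLB : 0 < cLB) (hL8 : 8 / cLB ≤ L) (hLn : L ≤ n)
    (c : ℝ) (hc : c = max 4 (16 / cLB))
    (S1 S2 : ℝ) (hS1nonneg : 0 ≤ S1) (hS2nonneg : 0 ≤ S2)
    (hS1 : S1 ≤ c * n / L)
    (hcost : cLB * (S2 - 1) * L ≤ 4 * n + 2 * S1 + 2 * S2) :
    S2 ≤ c * n / L := by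
  have hLpos : 0 < L := lt_of_lt_of_le (div_pos (by norm_num) hcLB) hL8
  have hA : 8 ≤ cLB * L := by
    have h := (div_le_iff₀ hcLB).mp hL8
    linarith [h]
  have hc4 : 4 ≤ c := hc ▸ le_max_left _ _
  have hc16 : 16 ≤ c * cLB := by
    have h := hc ▸ le_max_right 4 (16 / cLB)
    calc (16:ℝ) = (16 / cLB) * cLB := by field_simp
    _ ≤ c * cLB := by nlinarith
  have hS1' : S1 * L ≤ c * n := by
    calc S1 * L ≤ (c * n / L) * L := by nlinarith
    _ = c * n := by field_simp
  have hnpos : (0:ℝ) < n := by linarith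
  have h8S1 : 8 * S1 ≤ c * cLB * n := by
    have h : (8 * S1) * L ≤ (c * cLB * n) * L := by nlinarith [mul_le_mul hA hS1' (by positivity) (by positivity)]
    exact le_of_mul_le_mul_right h hLpos
  have h1 : 8 * S2 ≤ cLB * L * S2 := by nlinarith
  have h16n : 16 * n ≤ c * cLB * n := by nlinarith
  have h4L : 4 * (cLB * L) ≤ c * cLB * n := by
    nlinarith [mul_nonneg (mul_nonneg (sub_nonneg.mpr hc4) hcLB.le) hnpos.le,
      mul_le_mul_of_nonneg_left hLn hcLB.le]
  rw [le_div_iff₀ hLpos]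
  have hkey : cLB * (S2 * L) ≤ cLB * (c * n) := by nlinarith
  exact le_of_mul_le_mul_left hkey hcLB
end
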